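/- Let A ∈ ℝ^{n×n} be recursively low-rank with partitioning tree T and positive integer r. If A is invertible and, additionally, A_{ii} − U_i Σ_p V_i^T is invertible for every pair of a nonroot node i and its parent p (where A_{ii} = A(I_i,I_i)), then there exists a recursively low-rank matrix Ã with the same partitioning tree T and the same integer r such that Ã = A^{-1}. -/

import Mathlib

open Matrix Finset
open scoped Classical

namespace RLRinv

structure Ctx (n r : ℕ) (ι : Type*) where
  root : ι
  Ch : ι → Finset ι
  Isub : ι → Finset (Fin n)
  par : ι → ι
  depth : ι → ℕ
  A : Matrix (Fin n) (Fin n) ℝ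
  U : ι → Fin n → Fin r → ℝ
  V : ι → Fin n → Fin r → ℝ
  Sig : ι → Matrix (Fin r) (Fin r) ℝ
  W : ι → Matrix (Fin r) (Fin r) ℝ
  Z : ι → Matrix (Fin r) (Fin r) ℝ

namespace Ctx

variable {n r : ℕ} {ι : Type*} (C : Ctx n r ι)

/-- The (extended-by-nothing) diagonal block matrix `B_q = A(I_q,I_q) - U_q Σ_{par q} V_qᵀ`
(for the root, just `A` restricted). -/
noncomputable def Bm (q : ι) : Matrix {x // x ∈ C.Isub q} {x // x ∈ C.Isub q} ℝ :=
  Matrix.of fun a b => C.A a.1 b.1 -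
    if q = C.root then 0 else ∑ c, ∑ d, C.U q a.1 c * C.Sig (C.par q) c d * C.V q b.1 d

noncomputable def Nm (q : ι) : Matrix {x // x ∈ C.Isub q} {x // x ∈ C.Isub q} ℝ := (C.Bm q)⁻¹

/-- Full-size extension of `Bm` by zero. -/
noncomputable def Bf (q : ι) (a b : Fin n) : ℝ :=
  if h : a ∈ C.Isub q ∧ b ∈ C.Isub q then C.Bm q ⟨a, h.1⟩ ⟨b, h.2⟩ else 0

/-- Full-size extension of `Nm = Bm⁻¹` by zero. -/
noncomputable def Nf (q : ι) (a b : Fin n) : ℝ :=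
  if h : a ∈ C.Isub q ∧ b ∈ C.Isub q then C.Nm q ⟨a, h.1⟩ ⟨b, h.2⟩ else 0

/-- `Ũ_q = -B_q⁻¹ U_q`, extended by zero. -/
noncomputable def Utf (q : ι) (a : Fin n) (e : Fin r) : ℝ :=
  -∑ b ∈ C.Isub q, C.Nf q a b * C.U q b e

/-- `Ṽ_q = -B_qᵀ⁻¹ V_q`, extended by zero. -/
noncomputable def Vtf (q : ι) (a : Fin n) (e : Fin r) : ℝ :=
  -∑ b ∈ C.Isub q, C.Nf q b a * C.V q b e

/-- Effective one-level core `S_p = Σ_p - W_p Σ_{par p} Z_pᵀ`. -/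
noncomputable def SSm (q : ι) : Matrix (Fin r) (Fin r) ℝ :=
  if q = C.root then C.Sig C.root else C.Sig q - C.W q * C.Sig (C.par q) * (C.Z q)ᵀ

noncomputable def XXm (p : ι) : Matrix (Fin r) (Fin r) ℝ :=
  Matrix.of fun d e => ∑ k ∈ C.Ch p, ∑ b ∈ C.Isub k, C.V k b d * C.Utf k b e

noncomputable def KKm (p : ι) : Matrix (Fin r) (Fin r) ℝ := 1 - C.XXm p * C.SSm p

/-- Local Woodbury core `Σ̃_p = -S_p (1 - X_p S_p)⁻¹`. -/
noncomputable def Stm (p : ι) : Matrix (Fin r) (Fin r) ℝ := -(C.SSm p * (C.KKm p)⁻¹)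

noncomputable def Ym (p : ι) : Matrix (Fin r) (Fin r) ℝ :=
  Matrix.of fun d e => ∑ k ∈ C.Ch p, ∑ b ∈ C.Isub k, C.V k b d * C.Utf p b e

noncomputable def Wtm (p : ι) : Matrix (Fin r) (Fin r) ℝ := C.W p + C.SSm p * C.Ym p

noncomputable def Y'm (p : ι) : Matrix (Fin r) (Fin r) ℝ :=
  Matrix.of fun d e => ∑ k ∈ C.Ch p, ∑ b ∈ C.Isub k, C.U k b d * C.Vtf p b e

noncomputable def Ztm (p : ι) : Matrix (Fin r) (Fin r) ℝ := C.Z p + (C.SSm p)ᵀ * C.Y'm p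

/-- Accumulated core with fuel. -/
noncomputable def Shf : ℕ → ι → Matrix (Fin r) (Fin r) ℝ
  | 0, p => C.Stm p
  | (k+1), p => C.Stm p + if p = C.root then 0 else C.Wtm p * Shf k (C.par p) * (C.Ztm p)ᵀ

noncomputable def Sh (p : ι) : Matrix (Fin r) (Fin r) ℝ :=
  C.Shf (C.depth C.root - C.depth p) p

structure Hyp [Fintype ι] (C : Ctx n r ι) : Prop where
  hIroot : C.Isub C.root = Finset.univ
  hunion : ∀ p, C.Ch p ≠ ∅ → C.Isub p = (C.Ch p).biUnion C.Isub
  hdisj : ∀ p, ∀ i ∈ C.Ch p, ∀ j ∈ C.Ch p, i ≠ j → Disjoint (C.Isub i) (C.Isub j)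
  hpar : ∀ i, i ≠ C.root → i ∈ C.Ch (C.par i)
  huniq : ∀ p q i, i ∈ C.Ch p → i ∈ C.Ch q → p = q
  hrnc : ∀ p, C.root ∉ C.Ch p
  hdepth : ∀ p, ∀ i ∈ C.Ch p, C.depth i < C.depth p
  hA1 : ∀ p, ∀ i ∈ C.Ch p, ∀ j ∈ C.Ch p, i ≠ j → ∀ a ∈ C.Isub i, ∀ b ∈ C.Isub j,
      C.A a b = ∑ c, ∑ d, C.U i a c * C.Sig p c d * C.V j b d
  hA2U : ∀ p, p ≠ C.root → ∀ i ∈ C.Ch p, ∀ a ∈ C.Isub i, ∀ d,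
      C.U p a d = ∑ c, C.U i a c * C.W p c d
  hA2V : ∀ p, p ≠ C.root → ∀ i ∈ C.Ch p, ∀ a ∈ C.Isub i, ∀ d,
      C.V p a d = ∑ c, C.V i a c * C.Z p c d
  hAinv : IsUnit C.A.det
  hblocks : ∀ i, i ≠ C.root → IsUnit (C.Bm i).det

end Ctx

namespace Ctx
variable {n r : ℕ} {ι : Type*} [Fintype ι] {C : Ctx n r ι}

lemma par_eq (hC : Hyp C) {p i : ι} (hi : i ∈ C.Ch p) : i ≠ C.root ∧ C.par i = p := by
  have h1 : i ≠ C.root := fun h => hC.hrnc p (h ▸ hi)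
  exact ⟨h1, hC.huniq _ _ _ (hC.hpar i h1) hi⟩

lemma sub_of_child (hC : Hyp C) {p q : ι} (hq : q ∈ C.Ch p) : C.Isub q ⊆ C.Isub p := by
  rw [hC.hunion p (Finset.ne_empty_of_mem hq)]
  exact Finset.subset_biUnion_of_mem _ hq

lemma sum_part (hC : Hyp C) {p : ι} (hne : C.Ch p ≠ ∅) (f : Fin n → ℝ) :
    ∑ b ∈ C.Isub p, f b = ∑ k ∈ C.Ch p, ∑ b ∈ C.Isub k, f b := by
  rw [hC.hunion p hne, Finset.sum_biUnion]
  exact fun x hx y hy hxy => hC.hdisj p x hx y hy hxy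

lemma child_unique (hC : Hyp C) {p k j : ι} {b : Fin n} (hk : k ∈ C.Ch p) (hj : j ∈ C.Ch p)
    (hbk : b ∈ C.Isub k) (hbj : b ∈ C.Isub j) : k = j := by
  by_contra hne
  exact Finset.disjoint_left.1 (hC.hdisj p k hk j hj hne) hbk hbj

lemma Bunit (hC : Hyp C) (q : ι) : IsUnit (C.Bm q).det := by
  by_cases hq : q = C.root
  · subst hq
    have he : ∀ x : Fin n, x ∈ C.Isub C.root := by
      intro x; rw [hC.hIroot]; exact Finset.mem_univ x
    let e : {x // x ∈ C.Isub C.root} ≃ Fin n := Equiv.subtypeUnivEquiv he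
    have : C.Bm C.root = C.A.submatrix e e := by
      ext a b
      simp [Bm, e, Equiv.subtypeUnivEquiv]
    rw [this, Matrix.det_submatrix_equiv_self]
    exact hC.hAinv
  · exact hC.hblocks q hq

lemma NBf (hC : Hyp C) {q : ι} {a c : Fin n} (ha : a ∈ C.Isub q) (hc : c ∈ C.Isub q) :
    ∑ b ∈ C.Isub q, C.Nf q a b * C.Bf q b c = if a = c then 1 else 0 := by
  have h1 : ∑ b ∈ C.Isub q, C.Nf q a b * C.Bf q b c
      = ∑ b : {x // x ∈ C.Isub q}, C.Nm q ⟨a, ha⟩ b * C.Bm q b ⟨c, hc⟩ := by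
    rw [← Finset.sum_coe_sort (C.Isub q) (fun b => C.Nf q a b * C.Bf q b c)]
    refine Finset.sum_congr rfl fun b _ => ?_
    simp [Nf, Bf, ha, hc, b.2]
  rw [h1]
  have h2 : C.Nm q * C.Bm q = 1 := Matrix.nonsing_inv_mul _ (Bunit hC q)
  have h3 := congrFun (congrFun h2 ⟨a, ha⟩) ⟨c, hc⟩
  rw [Matrix.mul_apply] at h3
  rw [h3]
  by_cases hac : a = c
  · subst hac; simp [Matrix.one_apply]
  · rw [Matrix.one_apply_ne (by simp [Subtype.ext_iff, hac]), if_neg hac]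

lemma BNf (hC : Hyp C) {q : ι} {a c : Fin n} (ha : a ∈ C.Isub q) (hc : c ∈ C.Isub q) :
    ∑ b ∈ C.Isub q, C.Bf q a b * C.Nf q b c = if a = c then 1 else 0 := by
  have h1 : ∑ b ∈ C.Isub q, C.Bf q a b * C.Nf q b c
      = ∑ b : {x // x ∈ C.Isub q}, C.Bm q ⟨a, ha⟩ b * C.Nm q b ⟨c, hc⟩ := by
    rw [← Finset.sum_coe_sort (C.Isub q) (fun b => C.Bf q a b * C.Nf q b c)]
    refine Finset.sum_congr rfl fun b _ => ?_
    simp [Nf, Bf, ha, hc, b.2]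
  rw [h1]
  have h2 : C.Bm q * C.Nm q = 1 := Matrix.mul_nonsing_inv _ (Bunit hC q)
  have h3 := congrFun (congrFun h2 ⟨a, ha⟩) ⟨c, hc⟩
  rw [Matrix.mul_apply] at h3
  rw [h3]
  by_cases hac : a = c
  · subst hac; simp [Matrix.one_apply]
  · rw [Matrix.one_apply_ne (by simp [Subtype.ext_iff, hac]), if_neg hac]


lemma sum_delta_mul {s : Finset (Fin n)} {a : Fin n} (ha : a ∈ s) (x : Fin n → ℝ) :
    ∑ c ∈ s, (if a = c then (1:ℝ) else 0) * x c = x a := by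
  rw [Finset.sum_congr rfl (fun c _ => by rw [ite_mul, one_mul, zero_mul])]
  rw [Finset.sum_ite_eq s a x, if_pos ha]

lemma solve (hC : Hyp C) {q : ι} (x y : Fin n → ℝ)
    (h : ∀ a ∈ C.Isub q, ∑ b ∈ C.Isub q, C.Bf q a b * x b = y a) :
    ∀ a ∈ C.Isub q, x a = ∑ b ∈ C.Isub q, C.Nf q a b * y b := by
  intro a ha
  have h1 : ∑ b ∈ C.Isub q, C.Nf q a b * y b
      = ∑ b ∈ C.Isub q, C.Nf q a b * ∑ c ∈ C.Isub q, C.Bf q b c * x c :=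
    Finset.sum_congr rfl fun b hb => by rw [h b hb]
  rw [h1]
  simp_rw [Finset.mul_sum]
  rw [Finset.sum_comm]
  simp_rw [← mul_assoc, ← Finset.sum_mul]
  symm
  calc ∑ c ∈ C.Isub q, (∑ b ∈ C.Isub q, C.Nf q a b * C.Bf q b c) * x c
      = ∑ c ∈ C.Isub q, (if a = c then (1:ℝ) else 0) * x c :=
        Finset.sum_congr rfl fun c hc => by rw [NBf hC ha hc]
    _ = x a := sum_delta_mul ha x

lemma solveT (hC : Hyp C) {q : ι} (x y : Fin n → ℝ)
    (h : ∀ b ∈ C.Isub q, ∑ a ∈ C.Isub q, C.Bf q a b * x a = y b) :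
    ∀ b ∈ C.Isub q, x b = ∑ a ∈ C.Isub q, C.Nf q a b * y a := by
  intro b hb
  have h1 : ∑ a ∈ C.Isub q, C.Nf q a b * y a
      = ∑ a ∈ C.Isub q, C.Nf q a b * ∑ c ∈ C.Isub q, C.Bf q c a * x c :=
    Finset.sum_congr rfl fun a ha => by rw [h a ha]
  rw [h1]
  simp_rw [Finset.mul_sum]
  rw [Finset.sum_comm]
  symm
  calc ∑ c ∈ C.Isub q, ∑ a ∈ C.Isub q, C.Nf q a b * (C.Bf q c a * x c)
      = ∑ c ∈ C.Isub q, (∑ a ∈ C.Isub q, C.Bf q c a * C.Nf q a b) * x c := by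
        refine Finset.sum_congr rfl fun c _ => ?_
        rw [Finset.sum_mul]
        exact Finset.sum_congr rfl fun a _ => by ring
    _ = ∑ c ∈ C.Isub q, (if c = b then (1:ℝ) else 0) * x c :=
        Finset.sum_congr rfl fun c hc => by rw [BNf hC hc hb]
    _ = x b := by
        rw [Finset.sum_congr rfl (fun c _ => by rw [ite_mul, one_mul, zero_mul])]
        rw [Finset.sum_ite_eq' (C.Isub q) b x, if_pos hb]

lemma Ut_sys (hC : Hyp C) {q : ι} {a : Fin n} (ha : a ∈ C.Isub q) (e : Fin r) :
    ∑ b ∈ C.Isub q, C.Bf q a b * C.Utf q b e = -C.U q a e := by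
  have h1 : ∑ b ∈ C.Isub q, C.Bf q a b * C.Utf q b e
      = -∑ b ∈ C.Isub q, ∑ b' ∈ C.Isub q, C.Bf q a b * (C.Nf q b b' * C.U q b' e) := by
    simp_rw [Utf, mul_neg, Finset.mul_sum, Finset.sum_neg_distrib]
  rw [h1, Finset.sum_comm]
  simp_rw [← mul_assoc, ← Finset.sum_mul]
  rw [neg_inj]
  calc ∑ b' ∈ C.Isub q, (∑ b ∈ C.Isub q, C.Bf q a b * C.Nf q b b') * C.U q b' e
      = ∑ b' ∈ C.Isub q, (if a = b' then (1:ℝ) else 0) * C.U q b' e :=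
        Finset.sum_congr rfl fun b' hb' => by rw [BNf hC ha hb']
    _ = C.U q a e := sum_delta_mul ha _

lemma Vt_sys (hC : Hyp C) {q : ι} {b : Fin n} (hb : b ∈ C.Isub q) (e : Fin r) :
    ∑ a ∈ C.Isub q, C.Bf q a b * C.Vtf q a e = -C.V q b e := by
  have h1 : ∑ a ∈ C.Isub q, C.Bf q a b * C.Vtf q a e
      = -∑ a ∈ C.Isub q, ∑ a' ∈ C.Isub q, C.Nf q a' a * C.Bf q a b * C.V q a' e := by
    simp_rw [Vtf, mul_neg, Finset.mul_sum, Finset.sum_neg_distrib]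
    rw [neg_inj]
    exact Finset.sum_congr rfl fun a _ => Finset.sum_congr rfl fun a' _ => by ring
  rw [h1, Finset.sum_comm]
  simp_rw [← Finset.sum_mul]
  rw [neg_inj]
  calc ∑ a' ∈ C.Isub q, (∑ a ∈ C.Isub q, C.Nf q a' a * C.Bf q a b) * C.V q a' e
      = ∑ a' ∈ C.Isub q, (if a' = b then (1:ℝ) else 0) * C.V q a' e :=
        Finset.sum_congr rfl fun a' ha' => by rw [NBf hC ha' hb]
    _ = C.V q b e := by
        rw [Finset.sum_congr rfl (fun c _ => by rw [ite_mul, one_mul, zero_mul])]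
        rw [Finset.sum_ite_eq' (C.Isub q) b (fun a' => C.V q a' e), if_pos hb]


lemma dd {r : ℕ} (X Y : Fin r → ℝ) (G : Matrix (Fin r) (Fin r) ℝ) :
    ∑ c, ∑ d, X c * G c d * Y d = X ⬝ᵥ G *ᵥ Y := by
  simp [dotProduct, Matrix.mulVec, Finset.mul_sum, mul_assoc]

lemma star {r : ℕ} (u v : Fin r → ℝ) (Wm G Zm : Matrix (Fin r) (Fin r) ℝ) :
    ∑ c, ∑ d, (∑ e, u e * Wm e c) * G c d * (∑ f, v f * Zm f d)
      = ∑ e, ∑ f, u e * (Wm * G * Zmᵀ) e f * v f := by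
  have l1 : ∀ c, (∑ e, u e * Wm e c) = (u ᵥ* Wm) c := fun c => by
    simp [Matrix.vecMul, dotProduct]
  have l2 : ∀ d, (∑ f, v f * Zm f d) = (v ᵥ* Zm) d := fun d => by
    simp [Matrix.vecMul, dotProduct]
  simp_rw [l1, l2]
  rw [dd, dd]
  rw [← Matrix.mulVec_mulVec, ← Matrix.mulVec_mulVec, dotProduct_mulVec u Wm _]
  rw [Matrix.mulVec_transpose]

lemma Bf_block (hC : Hyp C) {p i k : ι} {a b : Fin n} (hi : i ∈ C.Ch p) (hk : k ∈ C.Ch p)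
    (ha : a ∈ C.Isub i) (hb : b ∈ C.Isub k) :
    C.Bf p a b = (if i = k then C.Bf i a b else 0)
      + ∑ c, ∑ d, C.U i a c * C.SSm p c d * C.V k b d := by
  have hap : a ∈ C.Isub p := sub_of_child hC hi ha
  have hbp : b ∈ C.Isub p := sub_of_child hC hk hb
  obtain ⟨hir, hip⟩ := par_eq hC hi
  obtain ⟨hkr, hkp⟩ := par_eq hC hk
  have hBfp : C.Bf p a b = C.A a b -
      (if p = C.root then 0 else ∑ c, ∑ d, C.U p a c * C.Sig (C.par p) c d * C.V p b d) := by
    simp [Bf, Bm, hap, hbp]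
  by_cases hpr : p = C.root
  · subst hpr
    rw [hBfp, if_pos rfl, sub_zero]
    have hSS : C.SSm C.root = C.Sig C.root := by simp [SSm]
    rw [hSS]
    by_cases hik : i = k
    · subst hik
      rw [if_pos rfl]
      have hBfi : C.Bf i a b = C.A a b - ∑ c, ∑ d, C.U i a c * C.Sig C.root c d * C.V i b d := by
        simp [Bf, Bm, ha, hb, hir, hip]
      rw [hBfi]; ring
    · rw [if_neg hik, zero_add]
      exact hC.hA1 _ i hi k hk hik a ha b hb
  · have hWZ : ∑ c, ∑ d, C.U p a c * C.Sig (C.par p) c d * C.V p b d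
        = ∑ e, ∑ f, C.U i a e * (C.W p * C.Sig (C.par p) * (C.Z p)ᵀ) e f * C.V k b f := by
      have hu : ∀ c, C.U p a c = ∑ e, C.U i a e * C.W p e c := fun c =>
        hC.hA2U p hpr i hi a ha c
      have hv : ∀ d, C.V p b d = ∑ f, C.V k b f * C.Z p f d := fun d =>
        hC.hA2V p hpr k hk b hb d
      simp_rw [hu, hv]
      exact star _ _ _ _ _
    have hSS : ∑ c, ∑ d, C.U i a c * C.SSm p c d * C.V k b d
        = (∑ c, ∑ d, C.U i a c * C.Sig p c d * C.V k b d)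
          - ∑ e, ∑ f, C.U i a e * (C.W p * C.Sig (C.par p) * (C.Z p)ᵀ) e f * C.V k b f := by
      simp [SSm, hpr, Matrix.sub_apply, sub_mul, mul_sub, Finset.sum_sub_distrib]
    rw [hBfp, if_neg hpr, hWZ, hSS]
    by_cases hik : i = k
    · subst hik
      rw [if_pos rfl]
      have hBfi : C.Bf i a b = C.A a b - ∑ c, ∑ d, C.U i a c * C.Sig p c d * C.V i b d := by
        simp [Bf, Bm, ha, hb, hir, hip]
      rw [hBfi]; ring
    · rw [if_neg hik, zero_add, hC.hA1 p i hi k hk hik a ha b hb]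


lemma sum_pull2 {α : Type*} {r : ℕ} (s : Finset α) (g : α → Fin r → Fin r → ℝ) :
    ∑ a ∈ s, ∑ c, ∑ d, g a c d = ∑ c, ∑ d, ∑ a ∈ s, g a c d := by
  rw [Finset.sum_comm]
  exact Finset.sum_congr rfl fun c _ => Finset.sum_comm

lemma split_block (hC : Hyp C) {p q : ι} (hq : q ∈ C.Ch p) {a : Fin n} (ha : a ∈ C.Isub q)
    (x : Fin n → ℝ) :
    ∑ b ∈ C.Isub p, C.Bf p a b * x b
      = (∑ b ∈ C.Isub q, C.Bf q a b * x b)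
        + ∑ c, C.U q a c * ∑ d, C.SSm p c d * (∑ k ∈ C.Ch p, ∑ b ∈ C.Isub k, C.V k b d * x b) := by
  have hne : C.Ch p ≠ ∅ := Finset.ne_empty_of_mem hq
  rw [sum_part hC hne]
  have h1 : ∀ k ∈ C.Ch p, ∀ b ∈ C.Isub k,
      C.Bf p a b * x b = (if q = k then C.Bf q a b else 0) * x b
        + ∑ c, ∑ d, C.U q a c * (C.SSm p c d * (C.V k b d * x b)) := by
    intro k hk b hb
    rw [Bf_block hC hq hk ha hb, add_mul]
    congr 1
    rw [Finset.sum_mul]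
    refine Finset.sum_congr rfl fun c _ => ?_
    rw [Finset.sum_mul]
    exact Finset.sum_congr rfl fun d _ => by ring
  rw [Finset.sum_congr rfl fun k hk => Finset.sum_congr rfl fun b hb => h1 k hk b hb]
  simp_rw [Finset.sum_add_distrib]
  congr 1
  · -- diagonal part
    have h2 : ∀ k ∈ C.Ch p, ∑ b ∈ C.Isub k, (if q = k then C.Bf q a b else 0) * x b
        = if q = k then ∑ b ∈ C.Isub q, C.Bf q a b * x b else 0 := by
      intro k hk
      by_cases hqk : q = k
      · subst hqk; simp
      · simp [hqk]
    rw [Finset.sum_congr rfl h2, Finset.sum_ite_eq (C.Ch p) q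
      (fun _ => ∑ b ∈ C.Isub q, C.Bf q a b * x b), if_pos hq]
  · -- low-rank part
    have h3 : ∀ k ∈ C.Ch p, ∑ b ∈ C.Isub k, ∑ c, ∑ d, C.U q a c * (C.SSm p c d * (C.V k b d * x b))
        = ∑ c, ∑ d, ∑ b ∈ C.Isub k, C.U q a c * (C.SSm p c d * (C.V k b d * x b)) :=
      fun k _ => sum_pull2 _ _
    rw [Finset.sum_congr rfl h3, sum_pull2]
    simp_rw [← Finset.mul_sum]

lemma split_blockT (hC : Hyp C) {p q : ι} (hq : q ∈ C.Ch p) {b : Fin n} (hb : b ∈ C.Isub q)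
    (x : Fin n → ℝ) :
    ∑ a ∈ C.Isub p, C.Bf p a b * x a
      = (∑ a ∈ C.Isub q, C.Bf q a b * x a)
        + ∑ d, C.V q b d * ∑ c, C.SSm p c d * (∑ k ∈ C.Ch p, ∑ a ∈ C.Isub k, C.U k a c * x a) := by
  have hne : C.Ch p ≠ ∅ := Finset.ne_empty_of_mem hq
  rw [sum_part hC hne]
  have h1 : ∀ k ∈ C.Ch p, ∀ a ∈ C.Isub k,
      C.Bf p a b * x a = (if k = q then C.Bf k a b else 0) * x a
        + ∑ d, ∑ c, C.V q b d * (C.SSm p c d * (C.U k a c * x a)) := by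
    intro k hk a ha
    rw [Bf_block hC hk hq ha hb, add_mul]
    congr 1
    · rw [Finset.sum_comm]
      rw [Finset.sum_mul]
      refine Finset.sum_congr rfl fun d _ => ?_
      rw [Finset.sum_mul]
      exact Finset.sum_congr rfl fun c _ => by ring
  rw [Finset.sum_congr rfl fun k hk => Finset.sum_congr rfl fun a ha => h1 k hk a ha]
  simp_rw [Finset.sum_add_distrib]
  congr 1
  · have h2 : ∀ k ∈ C.Ch p, ∑ a ∈ C.Isub k, (if k = q then C.Bf k a b else 0) * x a
        = if q = k then ∑ a ∈ C.Isub q, C.Bf q a b * x a else 0 := by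
      intro k hk
      by_cases hqk : k = q
      · subst hqk; simp
      · simp [hqk, Ne.symm hqk]
    rw [Finset.sum_congr rfl h2, Finset.sum_ite_eq (C.Ch p) q
      (fun _ => ∑ a ∈ C.Isub q, C.Bf q a b * x a), if_pos hq]
  · have h3 : ∀ k ∈ C.Ch p, ∑ a ∈ C.Isub k, ∑ d, ∑ c, C.V q b d * (C.SSm p c d * (C.U k a c * x a))
        = ∑ d, ∑ c, ∑ a ∈ C.Isub k, C.V q b d * (C.SSm p c d * (C.U k a c * x a)) :=
      fun k _ => sum_pull2 _ _
    rw [Finset.sum_congr rfl h3, sum_pull2]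
    simp_rw [← Finset.mul_sum]

lemma nestU (hC : Hyp C) {p q : ι} (hq : q ∈ C.Ch p) (hpr : p ≠ C.root)
    {a : Fin n} (ha : a ∈ C.Isub q) (e : Fin r) :
    C.Utf p a e = ∑ c, C.Utf q a c * C.Wtm p c e := by
  have hsys : ∀ a' ∈ C.Isub q, ∑ b ∈ C.Isub q, C.Bf q a' b * C.Utf p b e
      = -∑ c, C.U q a' c * C.Wtm p c e := by
    intro a' ha'
    have hU := Ut_sys hC (sub_of_child hC hq ha') e
    rw [split_block hC hq ha' (fun b => C.Utf p b e)] at hU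
    have hY : ∀ c, ∑ d, C.SSm p c d * (∑ k ∈ C.Ch p, ∑ b ∈ C.Isub k, C.V k b d * C.Utf p b e)
        = (C.SSm p * C.Ym p) c e := by
      intro c
      rw [Matrix.mul_apply]
      exact Finset.sum_congr rfl fun d _ => by rw [Ym]; rfl
    have hU2 : (∑ c, C.U q a' c * ∑ d, C.SSm p c d *
          (∑ k ∈ C.Ch p, ∑ b ∈ C.Isub k, C.V k b d * C.Utf p b e))
        = ∑ c, C.U q a' c * (C.SSm p * C.Ym p) c e :=
      Finset.sum_congr rfl fun c _ => by rw [hY c]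
    rw [hU2] at hU
    have hUp : C.U p a' e = ∑ c, C.U q a' c * C.W p c e := hC.hA2U p hpr q hq a' ha' e
    rw [eq_sub_of_add_eq hU, hUp]
    simp only [Wtm, Matrix.add_apply, mul_add, Finset.sum_add_distrib]
    ring
  have := solve hC (fun b => C.Utf p b e) (fun a' => -∑ c, C.U q a' c * C.Wtm p c e) hsys a ha
  beta_reduce at this
  rw [this]
  simp_rw [mul_neg, Finset.mul_sum, Finset.sum_neg_distrib]
  rw [Finset.sum_comm]
  simp_rw [Utf, ← Finset.sum_neg_distrib]
  refine Finset.sum_congr rfl fun c _ => ?_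
  rw [Finset.sum_mul]
  exact Finset.sum_congr rfl fun b _ => by ring

lemma nestV (hC : Hyp C) {p q : ι} (hq : q ∈ C.Ch p) (hpr : p ≠ C.root)
    {b : Fin n} (hb : b ∈ C.Isub q) (e : Fin r) :
    C.Vtf p b e = ∑ c, C.Vtf q b c * C.Ztm p c e := by
  have hsys : ∀ b' ∈ C.Isub q, ∑ a ∈ C.Isub q, C.Bf q a b' * C.Vtf p a e
      = -∑ c, C.V q b' c * C.Ztm p c e := by
    intro b' hb'
    have hV := Vt_sys hC (sub_of_child hC hq hb') e
    rw [split_blockT hC hq hb' (fun a => C.Vtf p a e)] at hV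
    have hY : ∀ d, ∑ c, C.SSm p c d * (∑ k ∈ C.Ch p, ∑ a ∈ C.Isub k, C.U k a c * C.Vtf p a e)
        = ((C.SSm p)ᵀ * C.Y'm p) d e := by
      intro d
      rw [Matrix.mul_apply]
      refine Finset.sum_congr rfl fun c _ => ?_
      rw [Matrix.transpose_apply, Y'm]; rfl
    have hV2 : (∑ d, C.V q b' d * ∑ c, C.SSm p c d *
          (∑ k ∈ C.Ch p, ∑ a ∈ C.Isub k, C.U k a c * C.Vtf p a e))
        = ∑ d, C.V q b' d * ((C.SSm p)ᵀ * C.Y'm p) d e :=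
      Finset.sum_congr rfl fun d _ => by rw [hY d]
    rw [hV2] at hV
    have hVp : C.V p b' e = ∑ c, C.V q b' c * C.Z p c e := hC.hA2V p hpr q hq b' hb' e
    rw [eq_sub_of_add_eq hV, hVp]
    simp only [Ztm, Matrix.add_apply, mul_add, Finset.sum_add_distrib]
    ring
  have := solveT hC (fun a => C.Vtf p a e) (fun b' => -∑ c, C.V q b' c * C.Ztm p c e) hsys b hb
  beta_reduce at this
  rw [this]
  simp_rw [mul_neg, Finset.mul_sum, Finset.sum_neg_distrib]
  rw [Finset.sum_comm]
  simp_rw [Vtf, ← Finset.sum_neg_distrib]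
  refine Finset.sum_congr rfl fun c _ => ?_
  rw [Finset.sum_mul]
  exact Finset.sum_congr rfl fun a _ => by ring


lemma Utf_zero {q : ι} {a : Fin n} (ha : a ∉ C.Isub q) (e : Fin r) : C.Utf q a e = 0 := by
  have : ∀ b ∈ C.Isub q, C.Nf q a b * C.U q b e = 0 := by
    intro b hb
    have : C.Nf q a b = 0 := by simp [Nf, ha]
    rw [this, zero_mul]
  simp [Utf, Finset.sum_congr rfl this]

lemma Vtf_zero {q : ι} {a : Fin n} (ha : a ∉ C.Isub q) (e : Fin r) : C.Vtf q a e = 0 := by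
  have : ∀ b ∈ C.Isub q, C.Nf q b a * C.V q b e = 0 := by
    intro b hb
    have : C.Nf q b a = 0 := by simp [Nf, ha]
    rw [this, zero_mul]
  simp [Vtf, Finset.sum_congr rfl this]

lemma KKunit (hC : Hyp C) {p : ι} (hne : C.Ch p ≠ ∅) : IsUnit (C.KKm p).det := by
  rw [isUnit_iff_ne_zero]
  intro hdet
  obtain ⟨v, hv0, hvK⟩ := (Matrix.exists_mulVec_eq_zero_iff).2 hdet
  set u : Fin r → ℝ := (C.SSm p) *ᵥ v with hu
  have hv : v = (C.XXm p) *ᵥ u := by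
    rw [KKm, Matrix.sub_mulVec, Matrix.one_mulVec, ← Matrix.mulVec_mulVec, sub_eq_zero] at hvK
    exact hvK
  set x : Fin n → ℝ := fun b => ∑ k ∈ C.Ch p, -∑ e, C.Utf k b e * u e with hx
  have hxval : ∀ q ∈ C.Ch p, ∀ b ∈ C.Isub q, x b = -∑ e, C.Utf q b e * u e := by
    intro q hq b hb
    rw [hx]
    refine Finset.sum_eq_single q (fun k hk hkq => ?_) (fun h => absurd hq h)
    have hbk : b ∉ C.Isub k := fun hbk => hkq (child_unique hC hk hq hbk hb)
    simp [Utf_zero hbk]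
  have hdiag : ∀ q ∈ C.Ch p, ∀ a ∈ C.Isub q,
      ∑ b ∈ C.Isub q, C.Bf q a b * x b = ∑ e, C.U q a e * u e := by
    intro q hq a haq
    calc ∑ b ∈ C.Isub q, C.Bf q a b * x b
        = ∑ b ∈ C.Isub q, ∑ e, -(C.Bf q a b * C.Utf q b e * u e) := by
          refine Finset.sum_congr rfl fun b hb => ?_
          rw [hxval q hq b hb, mul_neg, Finset.mul_sum, ← Finset.sum_neg_distrib]
          exact Finset.sum_congr rfl fun e _ => by ring
      _ = ∑ e, -((∑ b ∈ C.Isub q, C.Bf q a b * C.Utf q b e) * u e) := by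
          rw [Finset.sum_comm]
          refine Finset.sum_congr rfl fun e _ => ?_
          rw [Finset.sum_mul, ← Finset.sum_neg_distrib]
      _ = ∑ e, C.U q a e * u e := by
          refine Finset.sum_congr rfl fun e _ => ?_
          rw [Ut_sys hC haq e]; ring
  have hVx : ∀ d, (∑ k ∈ C.Ch p, ∑ b ∈ C.Isub k, C.V k b d * x b) = -v d := by
    intro d
    calc ∑ k ∈ C.Ch p, ∑ b ∈ C.Isub k, C.V k b d * x b
        = ∑ k ∈ C.Ch p, ∑ b ∈ C.Isub k, ∑ e, -(C.V k b d * C.Utf k b e * u e) := by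
          refine Finset.sum_congr rfl fun k hk => Finset.sum_congr rfl fun b hb => ?_
          rw [hxval k hk b hb, mul_neg, Finset.mul_sum, ← Finset.sum_neg_distrib]
          exact Finset.sum_congr rfl fun e _ => by ring
      _ = ∑ e, -((∑ k ∈ C.Ch p, ∑ b ∈ C.Isub k, C.V k b d * C.Utf k b e) * u e) := by
          rw [Finset.sum_congr rfl fun k (_ : k ∈ C.Ch p) => Finset.sum_comm, Finset.sum_comm]
          refine Finset.sum_congr rfl fun e _ => ?_
          rw [Finset.sum_mul, ← Finset.sum_neg_distrib]
          refine Finset.sum_congr rfl fun k _ => ?_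
          rw [Finset.sum_mul, ← Finset.sum_neg_distrib]
      _ = -v d := by
          rw [hv]
          have h : (C.XXm p *ᵥ u) d
              = ∑ e, (∑ k ∈ C.Ch p, ∑ b ∈ C.Isub k, C.V k b d * C.Utf k b e) * u e := by
            simp [Matrix.mulVec, dotProduct, XXm]
          rw [h, ← Finset.sum_neg_distrib]
  have hBx : ∀ a ∈ C.Isub p, ∑ b ∈ C.Isub p, C.Bf p a b * x b = 0 := by
    intro a ha
    obtain ⟨q, hq, haq⟩ := Finset.mem_biUnion.1 (by rw [← hC.hunion p hne]; exact ha)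
    rw [split_block hC hq haq x, hdiag q hq a haq]
    have h2' : (∑ c, C.U q a c * ∑ d, C.SSm p c d *
          (∑ k ∈ C.Ch p, ∑ b ∈ C.Isub k, C.V k b d * x b))
        = -∑ c, C.U q a c * u c := by
      rw [← Finset.sum_neg_distrib]
      refine Finset.sum_congr rfl fun c _ => ?_
      rw [Finset.sum_congr rfl fun d (_ : d ∈ (Finset.univ : Finset (Fin r))) => by rw [hVx d]]
      have h3 : ∑ d, C.SSm p c d * -v d = -u c := by
        rw [hu]
        simp [Matrix.mulVec, dotProduct, mul_neg, Finset.sum_neg_distrib]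
      rw [h3]; ring
    rw [h2']; ring
  have hx0 : ∀ b ∈ C.Isub p, x b = 0 := by
    intro b hb
    have hs := solve hC x (fun _ => (0:ℝ)) hBx b hb
    simpa using hs
  apply hv0
  funext d
  have hfin : (C.XXm p *ᵥ u) d = 0 := by
    calc (C.XXm p *ᵥ u) d
        = ∑ k ∈ C.Ch p, ∑ b ∈ C.Isub k, C.V k b d * (∑ e, C.Utf k b e * u e) := by
          have h : (C.XXm p *ᵥ u) d
              = ∑ e, (∑ k ∈ C.Ch p, ∑ b ∈ C.Isub k, C.V k b d * C.Utf k b e) * u e := by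
            simp [Matrix.mulVec, dotProduct, XXm]
          rw [h]
          simp_rw [Finset.sum_mul]
          rw [Finset.sum_comm]
          refine Finset.sum_congr rfl fun k _ => ?_
          rw [Finset.sum_comm]
          refine Finset.sum_congr rfl fun b _ => ?_
          rw [Finset.mul_sum]
          exact Finset.sum_congr rfl fun e _ => by ring
      _ = 0 := by
          refine Finset.sum_eq_zero fun k hk => Finset.sum_eq_zero fun b hb => ?_
          have hbp : b ∈ C.Isub p := sub_of_child hC hk hb
          have h0 := hx0 b hbp
          rw [hxval k hk b hb, neg_eq_zero] at h0
          rw [h0, mul_zero]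
  rw [hv]
  show (C.XXm p *ᵥ u) d = (0 : Fin r → ℝ) d
  rw [hfin]; rfl


lemma core (hC : Hyp C) {p q j : ι} (hq : q ∈ C.Ch p) (hj : j ∈ C.Ch p)
    {a c : Fin n} (ha : a ∈ C.Isub q) (hc : c ∈ C.Isub j) :
    C.Nf p a c = (if c ∈ C.Isub q then C.Nf q a c else 0)
      + ∑ e, C.Utf q a e * ∑ f, C.Stm p e f * C.Vtf j c f := by
  have hne : C.Ch p ≠ ∅ := Finset.ne_empty_of_mem hq
  have hcp : c ∈ C.Isub p := sub_of_child hC hj hc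
  set vE : Fin r → ℝ := fun d => ∑ k ∈ C.Ch p, ∑ b ∈ C.Isub k, C.V k b d * C.Nf p b c with hvE
  set sse : Fin r → ℝ := (C.SSm p) *ᵥ vE with hsse
  have hssee : ∀ e, sse e = ∑ d, C.SSm p e d * vE d := fun e => by
    rw [hsse]; simp [Matrix.mulVec, dotProduct]
  -- Step 1
  have step1 : ∀ q' ∈ C.Ch p, ∀ a' ∈ C.Isub q',
      C.Nf p a' c = (if c ∈ C.Isub q' then C.Nf q' a' c else 0)
        + ∑ e, C.Utf q' a' e * sse e := by
    intro q' hq' a' ha'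
    have hsys : ∀ a'' ∈ C.Isub q', ∑ b ∈ C.Isub q', C.Bf q' a'' b * C.Nf p b c
        = (if a'' = c then 1 else 0) - ∑ e, C.U q' a'' e * sse e := by
      intro a'' ha''
      have hBN := BNf hC (sub_of_child hC hq' ha'') hcp
      rw [split_block hC hq' ha'' (fun b => C.Nf p b c)] at hBN
      have hr : (∑ e, C.U q' a'' e * ∑ d, C.SSm p e d *
            (∑ k ∈ C.Ch p, ∑ b ∈ C.Isub k, C.V k b d * C.Nf p b c))
          = ∑ e, C.U q' a'' e * sse e := by
        refine Finset.sum_congr rfl fun e _ => ?_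
        rw [hssee e]
      rw [hr] at hBN
      rw [eq_sub_of_add_eq hBN]
    have := solve hC (fun b => C.Nf p b c)
      (fun a'' => (if a'' = c then 1 else 0) - ∑ e, C.U q' a'' e * sse e) hsys a' ha'
    beta_reduce at this
    rw [this]
    simp_rw [mul_sub, Finset.sum_sub_distrib, sub_eq_add_neg]
    congr 1
    · calc ∑ b ∈ C.Isub q', C.Nf q' a' b * (if b = c then (1:ℝ) else 0)
          = ∑ b ∈ C.Isub q', (if b = c then C.Nf q' a' b else 0) :=
            Finset.sum_congr rfl fun b _ => by
              by_cases hbc : b = c <;> simp [hbc]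
        _ = if c ∈ C.Isub q' then C.Nf q' a' c else 0 := Finset.sum_ite_eq' _ _ _
    · calc -∑ b ∈ C.Isub q', C.Nf q' a' b * ∑ e, C.U q' b e * sse e
          = ∑ e, (-∑ b ∈ C.Isub q', C.Nf q' a' b * C.U q' b e) * sse e := by
            simp_rw [Finset.mul_sum]
            rw [Finset.sum_comm, ← Finset.sum_neg_distrib]
            refine Finset.sum_congr rfl fun e _ => ?_
            rw [neg_mul, neg_inj, Finset.sum_mul]
            exact Finset.sum_congr rfl fun b _ => by ring
        _ = ∑ e, C.Utf q' a' e * sse e :=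
            Finset.sum_congr rfl fun e _ => by rw [Utf]
  -- Step 2 : solve for sse
  have hVtf : ∀ d, ∑ k ∈ C.Ch p, ∑ b ∈ C.Isub k,
      C.V k b d * (if c ∈ C.Isub k then C.Nf k b c else 0) = -C.Vtf j c d := by
    intro d
    calc ∑ k ∈ C.Ch p, ∑ b ∈ C.Isub k, C.V k b d * (if c ∈ C.Isub k then C.Nf k b c else 0)
        = ∑ b ∈ C.Isub j, C.V j b d * C.Nf j b c := by
          rw [Finset.sum_eq_single j (fun k hk hkj => Finset.sum_eq_zero fun b hb => by
                rw [if_neg (fun hck => hkj (child_unique hC hk hj hck hc)), mul_zero])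
              (fun h => absurd hj h)]
          exact Finset.sum_congr rfl fun b _ => by rw [if_pos hc]
      _ = -C.Vtf j c d := by
          rw [Vtf, neg_neg]
          exact Finset.sum_congr rfl fun b _ => mul_comm _ _
  have hKKvE : (C.KKm p) *ᵥ vE = fun d => -C.Vtf j c d := by
    funext d
    have hpoint : vE d = -C.Vtf j c d + ∑ e, C.XXm p d e * sse e := by
      calc vE d = ∑ k ∈ C.Ch p, ∑ b ∈ C.Isub k, C.V k b d *
            ((if c ∈ C.Isub k then C.Nf k b c else 0) + ∑ e, C.Utf k b e * sse e) := by
            refine Finset.sum_congr rfl fun k hk => Finset.sum_congr rfl fun b hb => ?_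
            rw [step1 k hk b hb]
        _ = (∑ k ∈ C.Ch p, ∑ b ∈ C.Isub k, C.V k b d * (if c ∈ C.Isub k then C.Nf k b c else 0))
            + ∑ k ∈ C.Ch p, ∑ b ∈ C.Isub k, C.V k b d * ∑ e, C.Utf k b e * sse e := by
            simp_rw [mul_add, Finset.sum_add_distrib]
        _ = -C.Vtf j c d + ∑ e, C.XXm p d e * sse e := by
            rw [hVtf d]
            congr 1
            calc ∑ k ∈ C.Ch p, ∑ b ∈ C.Isub k, C.V k b d * ∑ e, C.Utf k b e * sse e
                = ∑ k ∈ C.Ch p, ∑ b ∈ C.Isub k, ∑ e, C.V k b d * C.Utf k b e * sse e := by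
                  refine Finset.sum_congr rfl fun k _ => Finset.sum_congr rfl fun b _ => ?_
                  rw [Finset.mul_sum]
                  exact Finset.sum_congr rfl fun e _ => by ring
              _ = ∑ e, ∑ k ∈ C.Ch p, ∑ b ∈ C.Isub k, C.V k b d * C.Utf k b e * sse e := by
                  rw [Finset.sum_congr rfl fun k (_ : k ∈ C.Ch p) => Finset.sum_comm,
                    Finset.sum_comm]
              _ = ∑ e, C.XXm p d e * sse e := by
                  refine Finset.sum_congr rfl fun e _ => ?_
                  rw [XXm]
                  simp only [Matrix.of_apply]
                  rw [Finset.sum_mul]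
                  exact Finset.sum_congr rfl fun k _ => by rw [Finset.sum_mul]
    have hKKd : (C.KKm p *ᵥ vE) d = vE d - ∑ e, C.XXm p d e * sse e := by
      rw [KKm, Matrix.sub_mulVec, Matrix.one_mulVec]
      have h2 : (C.XXm p * C.SSm p) *ᵥ vE = C.XXm p *ᵥ sse := by
        rw [← Matrix.mulVec_mulVec, hsse]
      rw [h2]
      simp [Matrix.mulVec, dotProduct]
    rw [hKKd, hpoint]; ring
  have hKu : IsUnit (C.KKm p).det := KKunit hC hne
  have hvEval : vE = (C.KKm p)⁻¹ *ᵥ (fun d => -C.Vtf j c d) := by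
    rw [← hKKvE, Matrix.mulVec_mulVec, Matrix.nonsing_inv_mul _ hKu, Matrix.one_mulVec]
  have hsseval : ∀ e, sse e = ∑ f, C.Stm p e f * C.Vtf j c f := by
    intro e
    rw [hsse, hvEval, Matrix.mulVec_mulVec]
    simp only [Stm, Matrix.mulVec, dotProduct, Matrix.neg_apply, mul_neg, neg_mul]
  rw [step1 q hq a ha]
  congr 1
  exact Finset.sum_congr rfl fun e _ => by rw [hsseval e]


lemma root_base (hC : Hyp C) (a c : Fin n) : C.A⁻¹ a c = C.Nf C.root a c := by
  have hmem : ∀ x : Fin n, x ∈ C.Isub C.root := fun x => by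
    rw [hC.hIroot]; exact Finset.mem_univ x
  let e : {x // x ∈ C.Isub C.root} ≃ Fin n := Equiv.subtypeUnivEquiv hmem
  have hB : C.Bm C.root = C.A.submatrix e e := by
    ext a b
    simp [Bm, e, Equiv.subtypeUnivEquiv]
  have hNm : C.Nm C.root = C.A⁻¹.submatrix e e := by
    rw [Nm, hB]
    apply Matrix.inv_eq_right_inv
    rw [Matrix.submatrix_mul_equiv, Matrix.mul_nonsing_inv _ hC.hAinv,
      Matrix.submatrix_one_equiv]
  have h1 : C.Nf C.root a c = C.Nm C.root ⟨a, hmem a⟩ ⟨c, hmem c⟩ := by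
    simp [Nf, hmem]
  rw [h1, hNm]
  rfl

lemma depth_le (hC : Hyp C) (p : ι) : C.depth p ≤ C.depth C.root := by
  suffices h : ∀ k, ∀ p : ι, Finset.univ.sup C.depth - C.depth p ≤ k →
      C.depth p ≤ C.depth C.root by
    exact h _ p le_rfl
  intro k
  induction k with
  | zero =>
    intro p hp
    by_cases hpr : p = C.root
    · subst hpr; exact le_rfl
    · have h1 : C.depth p < C.depth (C.par p) := hC.hdepth _ p (hC.hpar p hpr)
      have h2 : C.depth (C.par p) ≤ Finset.univ.sup C.depth :=
        Finset.le_sup (Finset.mem_univ _)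
      omega
  | succ k ih =>
    intro p hp
    by_cases hpr : p = C.root
    · subst hpr; exact le_rfl
    · have h1 : C.depth p < C.depth (C.par p) := hC.hdepth _ p (hC.hpar p hpr)
      have h2 : C.depth (C.par p) ≤ Finset.univ.sup C.depth :=
        Finset.le_sup (Finset.mem_univ _)
      exact le_trans (le_of_lt h1) (ih (C.par p) (by omega))

lemma depth_lt (hC : Hyp C) {p : ι} (hpr : p ≠ C.root) : C.depth p < C.depth C.root :=
  lt_of_lt_of_le (hC.hdepth _ p (hC.hpar p hpr)) (depth_le hC (C.par p))

lemma Sh_root : C.Sh C.root = C.Stm C.root := by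
  rw [Sh, Nat.sub_self]
  rfl

lemma Shf_stable (hC : Hyp C) :
    ∀ k k' (p : ι), C.depth C.root - C.depth p ≤ k' → k' ≤ k → C.Shf k' p = C.Sh p := by
  intro k
  induction k with
  | zero =>
    intro k' p h1 h2
    have hk' : k' = 0 := by omega
    subst hk'
    have h0 : C.depth C.root - C.depth p = 0 := by omega
    rw [Sh, h0]
  | succ k ih =>
    intro k' p h1 h2
    match k', h1, h2 with
    | 0, h1, h2 =>
      have h0 : C.depth C.root - C.depth p = 0 := by omega
      rw [Sh, h0]
    | (k''+1), h1, h2 =>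
      by_cases hpr : p = C.root
      · subst hpr
        rw [Sh, Nat.sub_self]
        simp [Shf]
      · have hq := hC.hpar p hpr
        have hlt : C.depth p < C.depth (C.par p) := hC.hdepth _ p hq
        have hle : C.depth (C.par p) ≤ C.depth C.root := depth_le hC _
        have hplt : C.depth p < C.depth C.root := depth_lt hC hpr
        have e1 : C.Shf (k''+1) p
            = C.Stm p + C.Wtm p * C.Shf k'' (C.par p) * (C.Ztm p)ᵀ := by
          simp [Shf, hpr]
        have e2 : C.Shf k'' (C.par p) = C.Sh (C.par p) := ih k'' (C.par p) (by omega) (by omega)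
        have hmu : C.depth C.root - C.depth p
            = (C.depth C.root - C.depth p - 1) + 1 := by omega
        have e3 : C.Sh p = C.Stm p
            + C.Wtm p * C.Shf (C.depth C.root - C.depth p - 1) (C.par p) * (C.Ztm p)ᵀ := by
          rw [Sh, hmu]
          simp [Shf, hpr]
        have e4 : C.Shf (C.depth C.root - C.depth p - 1) (C.par p) = C.Sh (C.par p) :=
          ih _ (C.par p) (by omega) (by omega)
        rw [e1, e2, e3, e4]

lemma Sh_unfold (hC : Hyp C) {p : ι} (hpr : p ≠ C.root) :
    C.Sh p = C.Stm p + C.Wtm p * C.Sh (C.par p) * (C.Ztm p)ᵀ := by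
  have hplt : C.depth p < C.depth C.root := depth_lt hC hpr
  have hmu : C.depth C.root - C.depth p
      = (C.depth C.root - C.depth p - 1) + 1 := by omega
  rw [Sh, hmu]
  have e4 : C.Shf (C.depth C.root - C.depth p - 1) (C.par p) = C.Sh (C.par p) := by
    have hlt : C.depth p < C.depth (C.par p) := hC.hdepth _ p (hC.hpar p hpr)
    have hle : C.depth (C.par p) ≤ C.depth C.root := depth_le hC _
    exact Shf_stable hC _ _ (C.par p) (by omega) le_rfl
  simp [Shf, hpr, e4]


noncomputable def SpW (C : Ctx n r ι) (p : ι) : Matrix (Fin r) (Fin r) ℝ :=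
  if p = C.root then 0 else C.Sh (C.par p)

lemma triple {r : ℕ} (x y : Fin r → ℝ) (M : Matrix (Fin r) (Fin r) ℝ) :
    ∑ c, ∑ d, x c * M c d * y d = ∑ c, x c * ∑ d, M c d * y d := by
  refine Finset.sum_congr rfl fun c _ => ?_
  rw [Finset.mul_sum]
  exact Finset.sum_congr rfl fun d _ => by ring

lemma accum (hC : Hyp C) {p i j : ι} (hi : i ∈ C.Ch p) (hj : j ∈ C.Ch p)
    {a b : Fin n} (ha : a ∈ C.Isub i) (hb : b ∈ C.Isub j) :
    (∑ e, C.Utf i a e * ∑ f, C.Stm p e f * C.Vtf j b f)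
      + (∑ e, C.Utf p a e * ∑ f, C.SpW p e f * C.Vtf p b f)
    = ∑ e, C.Utf i a e * ∑ f, C.Sh p e f * C.Vtf j b f := by
  by_cases hpr : p = C.root
  · subst hpr
    rw [Sh_root]
    simp [SpW]
  · rw [Sh_unfold hC hpr]
    have hrhs : ∑ e, C.Utf i a e *
          ∑ f, (C.Stm p + C.Wtm p * C.Sh (C.par p) * (C.Ztm p)ᵀ) e f * C.Vtf j b f
        = (∑ e, C.Utf i a e * ∑ f, C.Stm p e f * C.Vtf j b f)
          + ∑ e, C.Utf i a e *
              ∑ f, (C.Wtm p * C.Sh (C.par p) * (C.Ztm p)ᵀ) e f * C.Vtf j b f := by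
      simp_rw [Matrix.add_apply, add_mul, Finset.sum_add_distrib, mul_add]
      rw [Finset.sum_add_distrib]
    rw [hrhs]
    congr 1
    calc ∑ e, C.Utf p a e * ∑ f, C.SpW p e f * C.Vtf p b f
        = ∑ c, ∑ d, (∑ e, C.Utf i a e * C.Wtm p e c) * C.Sh (C.par p) c d
            * (∑ f, C.Vtf j b f * C.Ztm p f d) := by
          simp only [SpW, if_neg hpr]
          rw [← triple]
          refine Finset.sum_congr rfl fun c _ => Finset.sum_congr rfl fun d _ => ?_
          rw [nestU hC hi hpr ha c, nestV hC hj hpr hb d]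
      _ = ∑ e, ∑ f, C.Utf i a e * (C.Wtm p * C.Sh (C.par p) * (C.Ztm p)ᵀ) e f * C.Vtf j b f :=
          star _ _ _ _ _
      _ = ∑ e, C.Utf i a e *
            ∑ f, (C.Wtm p * C.Sh (C.par p) * (C.Ztm p)ᵀ) e f * C.Vtf j b f := triple _ _ _

lemma Dlem (hC : Hyp C) : ∀ p : ι, ∀ a ∈ C.Isub p, ∀ c ∈ C.Isub p,
    C.A⁻¹ a c = C.Nf p a c + ∑ e, C.Utf p a e * ∑ f, C.SpW p e f * C.Vtf p c f := by
  have hroot : ∀ a ∈ C.Isub C.root, ∀ c ∈ C.Isub C.root,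
      C.A⁻¹ a c = C.Nf C.root a c
        + ∑ e, C.Utf C.root a e * ∑ f, C.SpW C.root e f * C.Vtf C.root c f := by
    intro a _ c _
    rw [root_base hC a c]
    simp [SpW]
  suffices h : ∀ k, ∀ p : ι, C.depth C.root - C.depth p ≤ k →
      ∀ a ∈ C.Isub p, ∀ c ∈ C.Isub p,
        C.A⁻¹ a c = C.Nf p a c + ∑ e, C.Utf p a e * ∑ f, C.SpW p e f * C.Vtf p c f by
    intro p
    exact h _ p le_rfl
  intro k
  induction k with
  | zero =>
    intro p hp a ha c hc
    have hpr : p = C.root := by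
      by_contra hpr
      have := depth_lt hC hpr
      omega
    subst hpr
    exact hroot a ha c hc
  | succ k ih =>
    intro p hp a ha c hc
    by_cases hpr : p = C.root
    · subst hpr
      exact hroot a ha c hc
    · have hq := hC.hpar p hpr
      have hlt : C.depth p < C.depth (C.par p) := hC.hdepth _ p hq
      have hle : C.depth (C.par p) ≤ C.depth C.root := depth_le hC _
      have hag : a ∈ C.Isub (C.par p) := sub_of_child hC hq ha
      have hcg : c ∈ C.Isub (C.par p) := sub_of_child hC hq hc
      have hD := ih (C.par p) (by omega) a hag c hcg
      rw [hD, core hC hq hq ha hc, if_pos hc, add_assoc]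
      congr 1
      rw [accum hC hq hq ha hc]
      simp only [SpW, if_neg hpr]

end Ctx
end RLRinv

/-- `RLRFactors Ch Isub root A U V Sig W Z` says that the matrix `A` is recursively
low-rank with respect to the partitioning tree given by the children map `Ch` (with root
`root`) and the index sets `Isub`, realized by the factors `U, V, Sig, W, Z`:
(1) every off-diagonal sibling block factors as `A(Iᵢ,Iⱼ) = Uᵢ Σₚ Vⱼᵀ`, and
(2) the nested-basis relations `U_p(Iᵢ,:) = Uᵢ W_p` and `V_p(Iᵢ,:) = Vᵢ Z_p` hold for
every child `i` of a nonroot parent `p`. -/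
def RLRFactors {n r : ℕ} {ι : Type*} (Ch : ι → Finset ι) (Isub : ι → Finset (Fin n))
    (root : ι) (A : Matrix (Fin n) (Fin n) ℝ)
    (U V : ι → Fin n → Fin r → ℝ)
    (Sig W Z : ι → Matrix (Fin r) (Fin r) ℝ) : Prop :=
  (∀ p : ι, ∀ i ∈ Ch p, ∀ j ∈ Ch p, i ≠ j →
    ∀ a ∈ Isub i, ∀ b ∈ Isub j,
      A a b = ∑ c, ∑ d, U i a c * Sig p c d * V j b d) ∧
  (∀ p : ι, p ≠ root → ∀ i ∈ Ch p, ∀ a ∈ Isub i, ∀ d,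
      U p a d = ∑ c, U i a c * W p c d ∧ V p a d = ∑ c, V i a c * Z p c d)

/-- if `A ∈ ℝ^{n×n}` is recursively low-rank with partitioning tree `T` and
integer `r`, `A` is invertible, and each `A_{ii} − Uᵢ Σₚ Vᵢᵀ` (nonroot node `i`, parent
`p`) is invertible, then `A⁻¹` is recursively low-rank with the same tree `T` and the same
integer `r`. -/
theorem rlr_inverse {n r : ℕ} {ι : Type*} [Fintype ι]
    (root : ι) (Ch : ι → Finset ι) (Isub : ι → Finset (Fin n)) (par : ι → ι)
    (depth : ι → ℕ)
    (hIroot : Isub root = Finset.univ)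
    (hunion : ∀ p, Ch p ≠ ∅ → Isub p = (Ch p).biUnion Isub)
    (hdisj : ∀ p, ∀ i ∈ Ch p, ∀ j ∈ Ch p, i ≠ j → Disjoint (Isub i) (Isub j))
    (hpar : ∀ i, i ≠ root → i ∈ Ch (par i))
    (hparent_unique : ∀ p q i, i ∈ Ch p → i ∈ Ch q → p = q)
    (hroot_not_child : ∀ p, root ∉ Ch p)
    (hdepth : ∀ p, ∀ i ∈ Ch p, depth i < depth p)
    (A : Matrix (Fin n) (Fin n) ℝ)
    (U V : ι → Fin n → Fin r → ℝ) (Sig W Z : ι → Matrix (Fin r) (Fin r) ℝ)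
    (hA : RLRFactors Ch Isub root A U V Sig W Z)
    (hAinv : IsUnit A.det)
    (hblocks : ∀ i, i ≠ root → IsUnit (Matrix.det (Matrix.of
      (fun a b : {x // x ∈ Isub i} =>
        A a.1 b.1 - ∑ c, ∑ d, U i a.1 c * Sig (par i) c d * V i b.1 d)))) :
    ∃ (Ut Vt : ι → Fin n → Fin r → ℝ) (Sigt Wt Zt : ι → Matrix (Fin r) (Fin r) ℝ),
      RLRFactors Ch Isub root A⁻¹ Ut Vt Sigt Wt Zt := by
  set C : RLRinv.Ctx n r ι := ⟨root, Ch, Isub, par, depth, A, U, V, Sig, W, Z⟩ with hCdef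
  have hC : RLRinv.Ctx.Hyp C := by
    refine ⟨hIroot, hunion, hdisj, hpar, hparent_unique, hroot_not_child, hdepth, hA.1,
      fun p hp i hi a ha d => (hA.2 p hp i hi a ha d).1,
      fun p hp i hi a ha d => (hA.2 p hp i hi a ha d).2, hAinv, ?_⟩
    intro i hi
    have heq : C.Bm i = Matrix.of (fun a b : {x // x ∈ Isub i} =>
        A a.1 b.1 - ∑ c, ∑ d, U i a.1 c * Sig (par i) c d * V i b.1 d) := by
      ext a b
      simp [RLRinv.Ctx.Bm, hi]
      rfl
    rw [heq]
    exact hblocks i hi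
  refine ⟨C.Utf, C.Vtf, C.Sh, C.Wtm, C.Ztm, ?_, ?_⟩
  · intro p i hi j hj hij a ha b hb
    have hD := RLRinv.Ctx.Dlem hC p a (RLRinv.Ctx.sub_of_child hC hi ha)
      b (RLRinv.Ctx.sub_of_child hC hj hb)
    have hcore := RLRinv.Ctx.core hC hi hj ha hb
    have hnb : b ∉ Isub i := fun hbi => hij (RLRinv.Ctx.child_unique hC hi hj hbi hb)
    rw [if_neg hnb, zero_add] at hcore
    rw [RLRinv.Ctx.triple]
    calc A⁻¹ a b
        = C.Nf p a b + ∑ e, C.Utf p a e * ∑ f, C.SpW p e f * C.Vtf p b f := hD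
      _ = (∑ e, C.Utf i a e * ∑ f, C.Stm p e f * C.Vtf j b f)
          + ∑ e, C.Utf p a e * ∑ f, C.SpW p e f * C.Vtf p b f := by rw [hcore]
      _ = ∑ e, C.Utf i a e * ∑ f, C.Sh p e f * C.Vtf j b f :=
          RLRinv.Ctx.accum hC hi hj ha hb
  · intro p hp i hi a ha d
    exact ⟨RLRinv.Ctx.nestU hC hi hp ha d, RLRinv.Ctx.nestV hC hi hp ha d⟩
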